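/- Let P(x) = [x; ‖x‖²; ‖x‖⁴; …; ‖x‖^{2^m}] and Q(q) = [q; 1/2; …; 1/2] with m appended entries. If ‖q‖ = 1, then ‖Q(q) - P(x)‖² = 1 + m/4 - 2⟨q,x⟩ + ‖x‖^{2^{m+1}}. -/

import Mathlib

open Real RealInnerProductSpace

/-- L2-ALSH preprocessing transformation: append to `x` the `m` scalars
`‖x‖^(2^i)`, `i = 1, …, m`. -/
noncomputable def l2ALSH_P (m D : ℕ) (x : EuclideanSpace ℝ (Fin D)) :
    EuclideanSpace ℝ (Fin (D + m)) :=
  WithLp.toLp 2 fun j => if h : (j : ℕ) < D then x ⟨j, h⟩ else ‖x‖ ^ (2 ^ ((j : ℕ) - D + 1))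

/-- L2-ALSH query transformation: append `m` copies of `1/2`. -/
noncomputable def l2ALSH_Q (m D : ℕ) (q : EuclideanSpace ℝ (Fin D)) :
    EuclideanSpace ℝ (Fin (D + m)) :=
  WithLp.toLp 2 fun j => if h : (j : ℕ) < D then q ⟨j, h⟩ else 1 / 2

/-- Key identity of L2-ALSH: if `‖q‖ = 1` then
`‖Q(q) - P(x)‖² = 1 + m/4 - 2⟨q,x⟩ + ‖x‖^(2^(m+1))`. -/
theorem l2ALSH_key_identity (m D : ℕ) (hm : 1 ≤ m)
    (q x : EuclideanSpace ℝ (Fin D)) (hq : ‖q‖ = 1) :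
    ‖l2ALSH_Q m D q - l2ALSH_P m D x‖ ^ 2
      = 1 + m / 4 - 2 * ⟪q, x⟫ + ‖x‖ ^ (2 ^ (m + 1)) := by
  set t : ℝ := ‖x‖ with ht
  have key : ‖l2ALSH_Q m D q - l2ALSH_P m D x‖ ^ 2
      = ∑ j : Fin (D + m), (l2ALSH_Q m D q j - l2ALSH_P m D x j) ^ 2 := by
    rw [EuclideanSpace.norm_eq, Real.sq_sqrt (by positivity)]
    simp [PiLp.sub_apply, Real.norm_eq_abs, sq_abs]
  rw [key, Fin.sum_univ_add]
  have h1 : ∑ i : Fin D,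
      (l2ALSH_Q m D q (Fin.castAdd m i) - l2ALSH_P m D x (Fin.castAdd m i)) ^ 2
      = 1 + t ^ 2 - 2 * ⟪q, x⟫ := by
    have : ∑ i : Fin D, (q i - x i) ^ 2 = ‖q - x‖ ^ 2 := by
      rw [EuclideanSpace.norm_eq, Real.sq_sqrt (by positivity)]
      simp [PiLp.sub_apply, Real.norm_eq_abs, sq_abs]
    have hcast : ∀ i : Fin D,
        (l2ALSH_Q m D q (Fin.castAdd m i) - l2ALSH_P m D x (Fin.castAdd m i)) ^ 2
        = (q i - x i) ^ 2 := by
      intro i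
      simp [l2ALSH_Q, l2ALSH_P, Fin.castAdd, i.isLt]
    rw [Finset.sum_congr rfl (fun i _ => hcast i), this, norm_sub_sq_real, hq]
    ring
  have h2 : ∑ i : Fin m,
      (l2ALSH_Q m D q (Fin.natAdd D i) - l2ALSH_P m D x (Fin.natAdd D i)) ^ 2
      = m / 4 - t ^ 2 + t ^ 2 ^ (m + 1) := by
    have hterm : ∀ i : Fin m,
        (l2ALSH_Q m D q (Fin.natAdd D i) - l2ALSH_P m D x (Fin.natAdd D i)) ^ 2
        = 1 / 4 + (t ^ 2 ^ ((i : ℕ) + 2) - t ^ 2 ^ ((i : ℕ) + 1)) := by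
      intro i
      have h1 : ¬ (D + (i : ℕ) < D) := by omega
      have h2 : D + (i : ℕ) - D = (i : ℕ) := by omega
      simp only [l2ALSH_Q, l2ALSH_P, Fin.natAdd, dif_neg h1, h2]
      have : (t ^ 2 ^ ((i : ℕ) + 1)) ^ 2 = t ^ 2 ^ ((i : ℕ) + 2) := by
        rw [← pow_mul, pow_succ (2 : ℕ) ((i : ℕ) + 1)]
      rw [← ht]
      linear_combination this
    rw [Finset.sum_congr rfl (fun i _ => hterm i), Finset.sum_add_distrib]
    have htel : ∑ i : Fin m, (t ^ 2 ^ ((i : ℕ) + 2) - t ^ 2 ^ ((i : ℕ) + 1))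
        = t ^ 2 ^ (m + 1) - t ^ 2 := by
      rw [Fin.sum_univ_eq_sum_range (fun i => t ^ 2 ^ (i + 2) - t ^ 2 ^ (i + 1))]
      have := Finset.sum_range_sub (fun i => t ^ 2 ^ (i + 1)) m
      simpa using this
    rw [htel]
    simp
    ring
  rw [h1, h2]
  ring
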